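/- Let A be the compartmental matrix of a linear compartment model with n compartments, with edge and leak labels taken in a commutative ring, and write det(λI − A) = λ^n + e_{n−1}λ^{n−1} + ⋯ + e_1λ + e_0. Then for each i = 0, 1, …, n−1, the coefficient e_i equals the sum, over all spanning incoming forests F of the leak-augmented graph G̃ having exactly n−i edges, of the product π_F of the edge labels of F; that is, e_i = Σ_{F ∈ 𝓕_{n−i}(G̃)} π_F. -/

import Mathlib

open scoped Classical

/-- An *incoming forest*: a finite set of directed edges such that the underlying
undirected graph has no cycles (no loops, no pairs of opposite edges, and the
associated simple graph is acyclic) and each vertex has at most one outgoing edge.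
(Viewed as a spanning subgraph: all vertices are kept, only edges are recorded.) -/
def IsIncomingForest {V : Type*} (F : Finset (V × V)) : Prop :=
  (∀ e ∈ F, e.1 ≠ e.2) ∧
  (∀ e ∈ F, (e.2, e.1) ∉ F) ∧
  (SimpleGraph.fromRel fun u v => (u, v) ∈ F).IsAcyclic ∧
  (∀ e ∈ F, ∀ e' ∈ F, e.1 = e'.1 → e = e')

/-- The sum, over all spanning incoming forests with exactly `k` edges contained in the
edge set `E`, of the product of the edge labels (`w e` is the label of edge `e`). -/
noncomputable def forestSum {V R : Type*} [DecidableEq V] [CommRing R]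
    (E : Finset (V × V)) (w : V × V → R) (k : ℕ) : R :=
  ∑ F ∈ E.powerset.filter (fun F => F.card = k ∧ IsIncomingForest F), ∏ e ∈ F, w e

/-- A linear compartment model on vertex type `V` with labels in `R`:
a directed graph (edge `(j, i)` means `j → i`, labelled `a_{ij} = label (j,i)`),
a set of leak vertices, and a leak label `a_{0i} = leakLabel i` for each leak. -/
structure LinCompModel (V : Type*) (R : Type*) where
  edges : Finset (V × V)
  label : V × V → R
  leak : Finset V
  leakLabel : V → R
  no_loops : ∀ e ∈ edges, e.1 ≠ e.2

/-- The compartmental matrix: `A i j = a_{ij}` if `j → i` is an edge,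
`A i i = -a_{0i} - ∑_{k : i → k} a_{ki}`, and `0` otherwise. -/
noncomputable def compMatrix {V R : Type*} [Fintype V] [DecidableEq V] [CommRing R]
    (M : LinCompModel V R) : Matrix V V R :=
  Matrix.of fun i j =>
    if i = j then
      -(if i ∈ M.leak then M.leakLabel i else 0)
        - ∑ e ∈ M.edges.filter (fun e => e.1 = i), M.label e
    else if (j, i) ∈ M.edges then M.label (j, i) else 0

/-- The edge set of the leak-augmented graph `G̃`: the new vertex `0` is `none`,
original vertices `i` are `some i`; edges of `G` are kept and each leak `i` gives an
edge `i → 0`. -/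
noncomputable def augEdges {V R : Type*} [DecidableEq V] (M : LinCompModel V R) :
    Finset (Option V × Option V) :=
  M.edges.image (fun e => (some e.1, some e.2)) ∪ M.leak.image (fun i => (some i, none))

/-- The edge labels of the leak-augmented graph `G̃`. -/
def augLabel {V R : Type*} [CommRing R] (M : LinCompModel V R) :
    Option V × Option V → R :=
  fun e => match e with
    | (some j, some i) => M.label (j, i)
    | (some i, none) => M.leakLabel i
    | _ => 0


set_option linter.unusedSectionVars false
set_option maxHeartbeats 1000000

section Directed

variable {α : Type*}

/-- `a` is the image of `b` under the partial function `f`. -/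
def drel (f : α → Option α) (a b : α) : Prop := f b = some a

/-- no directed cycles -/
def NoCycle (f : α → Option α) : Prop := ∀ a, ¬ Relation.TransGen (drel f) a a

/-- iterate of a partial function -/
def optIter (f : α → Option α) : ℕ → α → Option α
  | 0, a => some a
  | (m+1), a => (f a).bind (optIter f m)

lemma optIter_add (f : α → Option α) (s t : ℕ) (a : α) :
    optIter f (s + t) a = (optIter f s a).bind (optIter f t) := by
  induction s generalizing a with
  | zero => simp [optIter]
  | succ s ih =>
    have : s + 1 + t = (s + t) + 1 := by omega
    rw [this]
    show (f a).bind (optIter f (s + t)) = ((f a).bind (optIter f s)).bind (optIter f t)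
    cases f a with
    | none => simp
    | some b => simp [ih]

lemma optIter_one (f : α → Option α) (a : α) : optIter f 1 a = f a := by
  show (f a).bind (optIter f 0) = f a
  cases f a <;> simp [optIter]

lemma transGen_iff_optIter (f : α → Option α) (a b : α) (h : Relation.TransGen (drel f) a b) :
    ∃ m, optIter f (m + 1) b = some a := by
  induction h with
  | single h => exact ⟨0, by simpa [optIter_one, drel] using h⟩
  | tail h1 h2 ih =>
    obtain ⟨m, hm⟩ := ih
    rename_i b' c
    refine ⟨m + 1, ?_⟩
    show (f c).bind (optIter f (m+1)) = some a
    rw [h2]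
    simpa using hm

lemma optIter_transGen (f : α → Option α) : ∀ (m : ℕ) (a b : α),
    optIter f (m + 1) a = some b → Relation.TransGen (drel f) b a := by
  intro m
  induction m with
  | zero =>
    intro a b h
    rw [optIter_one] at h
    exact Relation.TransGen.single h
  | succ m ih =>
    intro a b h
    have : optIter f (m + 2) a = (f a).bind (optIter f (m+1)) := rfl
    rw [this] at h
    cases hfa : f a with
    | none => rw [hfa] at h; simp at h
    | some c =>
      rw [hfa] at h
      simp only [Option.bind_some] at h
      exact (ih c b h).trans (Relation.TransGen.single hfa)

/-- From any directed cycle extract a "simple" one. -/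
lemma exists_simple_cycle (f : α → Option α) (h : ¬ NoCycle f) :
    ∃ (m : ℕ) (x : ℕ → α), 0 < m ∧ (∀ t, t < m → f (x t) = some (x (t+1))) ∧
      x m = x 0 ∧ Set.InjOn x (Set.Iio m) := by
  simp only [NoCycle, not_forall, not_not] at h
  obtain ⟨a, ha⟩ := h
  obtain ⟨k, hk⟩ := transGen_iff_optIter f a a ha
  have hex : ∃ m, 0 < m ∧ optIter f m a = some a := ⟨k + 1, Nat.succ_pos _, hk⟩
  classical
  set m := Nat.find hex with hm
  obtain ⟨hm0, hma⟩ := Nat.find_spec hex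
  -- iterates are defined up to m
  have hdef : ∀ t, t ≤ m → ∃ y, optIter f t a = some y := by
    intro t ht
    have := optIter_add f t (m - t) a
    rw [Nat.add_sub_cancel' ht] at this
    rw [this] at hma
    cases hy : optIter f t a with
    | none => rw [hy] at hma; simp at hma
    | some y => exact ⟨y, rfl⟩
  set x : ℕ → α := fun t => (optIter f (min t m) a).getD a with hx
  have hxval : ∀ t, t ≤ m → optIter f t a = some (x t) := by
    intro t ht
    obtain ⟨y, hy⟩ := hdef t ht
    simp [hx, min_eq_left ht, hy]
  refine ⟨m, x, hm0, ?_, ?_, ?_⟩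
  · intro t ht
    have h1 : optIter f (t + 1) a = (optIter f t a).bind f := by
      rw [optIter_add f t 1 a]; congr 1; funext z; exact optIter_one f z
    rw [hxval t (le_of_lt ht), hxval (t+1) ht] at h1
    simpa using h1.symm
  · have h0 : a = x 0 := by simpa [optIter] using (hxval 0 (Nat.zero_le _))
    have hm' : a = x m := by
      have h2 := hxval m le_rfl
      rw [hma] at h2
      exact Option.some_inj.mp h2
    rw [← hm', ← h0]
  · intro s hs u hu hsu
    simp only [Set.mem_Iio] at hs hu
    by_contra hne
    -- wlog s < u
    rcases Nat.lt_or_ge s u with hlt | hge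
    · -- optIter f (s + (m - u)) a = some a, with 0 < s + m - u < m
      have h1 : optIter f (m - u) (x u) = some a := by
        have := optIter_add f u (m - u) a
        rw [Nat.add_sub_cancel' (le_of_lt hu), hma, hxval u (le_of_lt hu)] at this
        simpa using this.symm
      have h2 : optIter f (s + (m - u)) a = some a := by
        rw [optIter_add f s (m - u) a, hxval s (le_of_lt hs)]
        simpa [hsu] using h1
      have hlt' : s + (m - u) < m := by omega
      have hpos : 0 < s + (m - u) := by omega
      exact absurd h2 (by
        have := Nat.find_min hex (m := s + (m - u)) (by omega)
        simp only [not_and] at this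
        exact this hpos)
    · have hlt : u < s := by omega
      have h1 : optIter f (m - s) (x s) = some a := by
        have := optIter_add f s (m - s) a
        rw [Nat.add_sub_cancel' (le_of_lt hs), hma, hxval s (le_of_lt hs)] at this
        simpa using this.symm
      have h2 : optIter f (u + (m - s)) a = some a := by
        rw [optIter_add f u (m - s) a, hxval u (le_of_lt hu)]
        simpa [hsu] using h1
      exact absurd h2 (by
        have := Nat.find_min hex (m := u + (m - s)) (by omega)
        simp only [not_and] at this
        exact this (by omega))

/-- pigeonhole: an `f`-invariant nonempty finite set yields a directed cycle. -/
lemma not_noCycle_of_invariant [Fintype α] (f : α → Option α) (S : Finset α)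
    (j0 : α) (hj0 : j0 ∈ S) (hstep : ∀ a ∈ S, ∃ b ∈ S, f a = some b) :
    ¬ NoCycle f := by
  classical
  set g : α → α := fun a => if h : ∃ b ∈ S, f a = some b then h.choose else a with hg
  have hgS : ∀ a ∈ S, g a ∈ S ∧ f a = some (g a) := by
    intro a ha
    have h : ∃ b ∈ S, f a = some b := hstep a ha
    have := h.choose_spec
    simp only [hg, dif_pos h]
    exact ⟨this.1, this.2⟩
  have hiter : ∀ t, g^[t] j0 ∈ S := by
    intro t
    induction t with
    | zero => simpa using hj0
    | succ t ih => rw [Function.iterate_succ_apply']; exact (hgS _ ih).1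
  have hstep' : ∀ t, f (g^[t] j0) = some (g^[t+1] j0) := by
    intro t
    rw [Function.iterate_succ_apply']
    exact (hgS _ (hiter t)).2
  obtain ⟨s, u, hne, heq⟩ := Finite.exists_ne_map_eq_of_infinite (fun t : ℕ => g^[t] j0)
  wlog hlt : s < u generalizing s u
  · exact this u s hne.symm heq.symm (by omega)
  intro hnc
  have hkey : ∀ k t, optIter f k (g^[t] j0) = some (g^[t+k] j0) := by
    intro k
    induction k with
    | zero => intro t; simp [optIter]
    | succ k ih =>
      intro t
      show (f (g^[t] j0)).bind (optIter f k) = _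
      rw [hstep' t]
      simp only [Option.bind_some]
      rw [ih (t+1)]
      congr 2
      omega
  have : optIter f ((u - s - 1) + 1) (g^[s] j0) = some (g^[s] j0) := by
    have hidx : s + (u - s - 1 + 1) = u := by omega
    rw [hkey, hidx, ← heq]
  exact hnc _ (optIter_transGen f _ _ _ this)

end Directed

section Det

variable {V : Type*} [Fintype V] [DecidableEq V] {R : Type*} [CommRing R]

/-- The matrix `1 - P` where `P` is the partial functional matrix of `f` (rows). -/
def funMat (f : V → Option V) : Matrix V V R :=
  Matrix.of fun j i => (if i = j then 1 else 0) - (if f j = some i then 1 else 0)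

lemma noCycle_update_none {f : V → Option V} (h : NoCycle f) (j : V) :
    NoCycle (Function.update f j none) := by
  intro a ha
  refine h a (Relation.TransGen.mono ?_ _ _ ha)
  intro x y hxy
  unfold drel at hxy ⊢
  by_cases hyj : y = j
  · rw [hyj, Function.update_self] at hxy; cases hxy
  · rwa [Function.update_of_ne hyj] at hxy

lemma det_funMat_of_noCycle (f : V → Option V) (h : NoCycle f) :
    (funMat f : Matrix V V R).det = 1 := by
  classical
  suffices H : ∀ (N : ℕ) (f : V → Option V), NoCycle f →
      (Finset.univ.filter (fun j => f j ≠ none)).card ≤ N →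
      (funMat f : Matrix V V R).det = 1 by
    exact H (Finset.univ.filter (fun j => f j ≠ none)).card f h le_rfl
  intro N
  induction N with
  | zero =>
    intro f hf hcard
    have hnone : ∀ j, f j = none := by
      intro j
      by_contra hj
      have : j ∈ Finset.univ.filter (fun j => f j ≠ none) := by simp [hj]
      have := Finset.card_pos.mpr ⟨j, this⟩
      omega
    have : (funMat f : Matrix V V R) = 1 := by
      ext j i
      simp [funMat, hnone j, Matrix.one_apply, eq_comm]
    rw [this, Matrix.det_one]
  | succ N ih =>
    intro f hf hcard
    set S := Finset.univ.filter (fun j => f j ≠ none) with hS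
    rcases Finset.eq_empty_or_nonempty S with hemp | hne
    · exact ih f hf (by rw [← hS, hemp]; simp)
    · -- find a minimal element of S wrt TransGen (drel f)
      haveI : IsTrans V (Relation.TransGen (drel f)) := ⟨fun _ _ _ => Relation.TransGen.trans⟩
      haveI : IsIrrefl V (Relation.TransGen (drel f)) := ⟨hf⟩
      have wf : WellFounded (Relation.TransGen (drel f)) :=
        Finite.wellFounded_of_trans_of_irrefl _
      obtain ⟨j, hjS, hjmin⟩ := wf.has_min (↑S) (by exact_mod_cast hne)
      have hfj : f j ≠ none := by simpa [hS] using hjS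
      obtain ⟨i, hi⟩ := Option.ne_none_iff_exists'.mp hfj
      have hiS : i ∉ (↑S : Set V) := fun hiS =>
        hjmin i hiS (Relation.TransGen.single (by exact hi))
      have hfi : f i = none := by
        by_contra hfi
        exact hiS (by simp [hS, hfi])
      have hij : j ≠ i := by
        rintro rfl
        exact hf j (Relation.TransGen.single (by exact hi))
      -- row operation
      set f' := Function.update f j none with hf'
      have hdet : (funMat f : Matrix V V R).det = (funMat f' : Matrix V V R).det := by
        rw [← Matrix.det_updateRow_add_self (funMat f) hij]
        congr 1
        ext a b
        by_cases haj : a = j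
        · subst haj
          simp only [Matrix.updateRow_self]
          show (funMat f a b + funMat f i b : R) = funMat f' a b
          simp only [funMat, Matrix.of_apply, hi, hfi, hf', Function.update_self]
          by_cases hbi : b = i <;> by_cases hba : b = a <;>
            simp [hbi, hba, Option.some_inj] <;> aesop
        · rw [Matrix.updateRow_ne haj]
          simp only [funMat, Matrix.of_apply, hf', Function.update_of_ne haj]
      rw [hdet]
      refine ih f' (noCycle_update_none hf j) ?_
      have hsub : Finset.univ.filter (fun a => f' a ≠ none) = S.erase j := by
        ext a
        by_cases haj : a = j <;>
          simp [hf', hS, haj, Function.update_of_ne, Function.update_self]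
      rw [hsub, Finset.card_erase_of_mem (by exact_mod_cast hjS)]
      omega

lemma det_funMat_of_cycle (f : V → Option V) (h : ¬ NoCycle f) :
    (funMat f : Matrix V V R).det = 0 := by
  classical
  obtain ⟨m, x, hm, hstep, hwrap, hinj⟩ := exists_simple_cycle f h
  set M : Matrix V V R := funMat f with hM
  set e : V → V → R := fun a i => if i = a then 1 else 0 with he
  have hrow : ∀ t, t < m → M (x t) = fun i => e (x t) i - e (x (t+1)) i := by
    intro t ht
    funext i
    simp only [hM, funMat, Matrix.of_apply, he, hstep t ht, Option.some_inj]
    congr 1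
    by_cases hix : i = x (t+1) <;> simp [hix, eq_comm]
  have hne0 : ∀ k, k < m → k ≠ 0 → x 0 ≠ x k := by
    intro k hk hk0 hx
    exact hk0 ((hinj (by simp [hm] : (0:ℕ) ∈ Set.Iio m) (by simpa using hk) hx).symm)
  -- iterated row additions
  have key : ∀ k, k < m →
      M.det = (M.updateRow (x 0) (fun i => e (x 0) i - e (x (k+1)) i)).det := by
    intro k
    induction k with
    | zero =>
      intro _
      rw [← hrow 0 hm, Matrix.updateRow_eq_self]
    | succ k ihk =>
      intro hk
      rw [ihk (by omega)]
      have hne : x 0 ≠ x (k+1) := hne0 (k+1) (by omega) (by omega)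
      rw [← Matrix.det_updateRow_add_self
        (M.updateRow (x 0) (fun i => e (x 0) i - e (x (k+1)) i)) hne]
      congr 1
      rw [Matrix.updateRow_self, Matrix.updateRow_ne (Ne.symm hne), hrow (k+1) hk]
      ext a b
      by_cases ha : a = x 0
      · subst ha
        simp only [Matrix.updateRow_self, Pi.add_apply]
        ring
      · simp only [Matrix.updateRow_ne ha]
  have := key (m - 1) (by omega)
  have hlast : m - 1 + 1 = m := by omega
  rw [hlast] at this
  rw [this]
  apply Matrix.det_eq_zero_of_row_eq_zero (x 0)
  intro i
  rw [Matrix.updateRow_self, hwrap]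
  ring

end Det

section GraphEquiv

variable {V : Type*} [Fintype V] [DecidableEq V]

/-- A choice of an `F`-orientation of an unordered edge. -/
noncomputable def dartF (F : Finset (Option V × Option V)) :
    Sym2 (Option V) → Option V × Option V :=
  fun s => if h : ∃ p : Option V × Option V, s = Sym2.mk p.1 p.2 ∧ p ∈ F then h.choose
    else (none, none)

lemma dartF_spec (F : Finset (Option V × Option V)) (s : Sym2 (Option V))
    (h : ∃ p : Option V × Option V, s = Sym2.mk p.1 p.2 ∧ p ∈ F) :
    dartF F s ∈ F ∧ s = Sym2.mk (dartF F s).1 (dartF F s).2 := by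
  unfold dartF
  rw [dif_pos h]
  exact ⟨h.choose_spec.2, h.choose_spec.1⟩

/-- From a directed simple cycle, the `fromRel` graph is not acyclic. -/
lemma not_isAcyclic_of_cycle (F : Finset (Option V × Option V)) (f : V → Option V)
    (compat : ∀ a b, ((some a, some b) ∈ F ↔ f a = some b))
    (hloop : ∀ e ∈ F, e.1 ≠ e.2)
    (hopp : ∀ e ∈ F, (e.2, e.1) ∉ F)
    (hcyc : ¬ NoCycle f) :
    ¬ (SimpleGraph.fromRel fun u v => (u, v) ∈ F).IsAcyclic := by
  intro hac
  obtain ⟨m, x, hm, hstep, hwrap, hinj⟩ := exists_simple_cycle f hcyc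
  -- vertices of the cycle in Option V
  set u : ℕ → Option V := fun t => some (x t) with hu
  have hF : ∀ t, t < m → ((some (x t), some (x (t+1))) ∈ F) := by
    intro t ht
    exact (compat _ _).mpr (hstep t ht)
  -- m = 1 : loop
  rcases Nat.lt_or_ge m 2 with hm2 | hm2
  · have hm1 : m = 1 := by omega
    have := hF 0 (by omega)
    have hxx : x 1 = x 0 := by rw [← hm1]; exact hwrap
    rw [hxx] at this
    exact hloop _ this rfl
  rcases Nat.lt_or_ge m 3 with hm3 | hm3
  · -- m = 2 : opposite pair
    have hm2' : m = 2 := by omega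
    have h01 := hF 0 (by omega)
    have h12 := hF 1 (by omega)
    have hxx : x 2 = x 0 := by rw [← hm2']; exact hwrap
    rw [hxx] at h12
    exact hopp _ h01 h12
  -- m ≥ 3 : genuine cycle; use the bridge characterization
  set G := SimpleGraph.fromRel fun u v : Option V => (u, v) ∈ F with hG
  have hxne : ∀ s t, s < m → t < m → s ≠ t → x s ≠ x t := by
    intro s t hs ht hst hx
    exact hst (hinj (by simpa using hs) (by simpa using ht) hx)
  have hadj : ∀ t, t < m → G.Adj (u t) (u (t+1)) := by
    intro t ht
    apply (SimpleGraph.fromRel_adj _ _ _).mpr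
    constructor
    · simp only [hu, Ne, Option.some_inj]
      rcases Nat.lt_or_ge (t+1) m with h | h
      · exact hxne t (t+1) ht h (by omega)
      · have : t + 1 = m := by omega
        rw [this, hwrap]
        exact fun hh => (hxne 0 t (by omega) ht (by omega)) hh.symm
    · exact Or.inl (hF t ht)
  have hedge : s(u 0, u 1) ∈ G.edgeSet := (hadj 0 (by omega))
  have hbridge := (SimpleGraph.isAcyclic_iff_forall_edge_isBridge.mp hac) hedge
  rw [SimpleGraph.isBridge_iff] at hbridge
  apply hbridge
  -- reachability from u 0 to u 1 in G minus the edge, going backwards around the cycle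
  set G' := G \ SimpleGraph.fromEdgeSet {s(u 0, u 1)} with hG'
  have hadj' : ∀ t, 1 ≤ t → t < m → G'.Adj (u t) (u (t+1)) := by
    intro t ht1 htm
    rw [hG', SimpleGraph.sdiff_adj]
    refine ⟨hadj t htm, ?_⟩
    rw [SimpleGraph.fromEdgeSet_adj]
    rintro ⟨hmem, -⟩
    rw [Set.mem_singleton_iff, Sym2.eq_iff] at hmem
    rcases hmem with ⟨h1, h2⟩ | ⟨h1, h2⟩
    · -- u t = u 0 with 1 ≤ t < m
      exact hxne t 0 htm (by omega) (by omega) (Option.some_inj.mp h1)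
    · -- u t = u 1, u (t+1) = u 0
      have ht1' : t = 1 := by
        by_contra hne
        exact hxne t 1 htm (by omega) hne (Option.some_inj.mp h1)
      subst ht1'
      -- then x 2 = x 0 with m ≥ 3
      exact hxne 2 0 (by omega) (by omega) (by omega) (Option.some_inj.mp h2)
  have hreach : ∀ t, 1 ≤ t → t ≤ m → G'.Reachable (u 1) (u t) := by
    intro t
    induction t with
    | zero => omega
    | succ t ih =>
      intro _ htm
      rcases Nat.lt_or_ge t 1 with h1 | h1
      · have : t = 0 := by omega
        subst this
        exact SimpleGraph.Reachable.refl _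
      · exact (ih h1 (by omega)).trans (hadj' t h1 (by omega)).reachable
  have hfin : G'.Reachable (u 1) (u 0) := by
    have h5 := hreach m (by omega) le_rfl
    simp only [hu] at h5 ⊢
    rwa [hwrap] at h5
  exact hfin.symm

/-- From an undirected cycle, with out-degrees ≤ 1 one gets a directed cycle. -/
lemma not_noCycle_of_not_isAcyclic (F : Finset (Option V × Option V)) (f : V → Option V)
    (compat : ∀ a b, ((some a, some b) ∈ F ↔ f a = some b))
    (h1 : ∀ e ∈ F, ∃ a, e.1 = some a)
    (h4 : ∀ e ∈ F, ∀ e' ∈ F, e.1 = e'.1 → e = e')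
    (hac : ¬ (SimpleGraph.fromRel fun u v => (u, v) ∈ F).IsAcyclic) :
    ¬ NoCycle f := by
  set G := SimpleGraph.fromRel fun u v : Option V => (u, v) ∈ F with hG
  simp only [SimpleGraph.IsAcyclic, not_forall, not_not] at hac
  obtain ⟨v, c, hcyc⟩ := hac
  -- the set of cycle vertices
  set T : Finset (Option V) := c.support.tail.toFinset with hT
  have htne : c.support.tail ≠ [] := by
    have hls := c.length_support
    have h3 := hcyc.three_le_length
    intro hnil
    rw [c.support_eq_cons, hnil] at hls
    simp only [List.length_cons, List.length_nil] at hls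
    omega
  have hvtail : v ∈ c.support.tail := by
    have h4' : c.support.getLast? = some v := by
      rw [List.getLast?_eq_getLast_of_ne_nil (by simp)]
      exact congrArg some (c.getLast_support)
    obtain ⟨b, l', hbl⟩ := List.exists_cons_of_ne_nil htne
    rw [c.support_eq_cons, hbl, List.getLast?_cons_cons] at h4'
    obtain ⟨hh, hv⟩ := List.mem_getLast?_eq_getLast (by rw [h4']; rfl)
    rw [hbl, hv]
    exact List.getLast_mem hh
  have hmemT : ∀ w, w ∈ c.support → w ∈ T := by
    intro w hw
    rw [hT, List.mem_toFinset]
    rcases c.mem_support_iff.mp hw with h | h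
    · rw [h]; exact hvtail
    · exact h
  -- nodup facts
  have hnodupE : c.edges.Nodup := hcyc.isCircuit.isTrail.edges_nodup
  have hnodupT : c.support.tail.Nodup := hcyc.support_nodup
  set ed : Finset (Sym2 (Option V)) := c.edges.toFinset with hed
  have hedcard : ed.card = c.length := by
    rw [hed, List.toFinset_card_of_nodup hnodupE, c.length_edges]
  have hTcard : T.card = c.length := by
    rw [hT, List.toFinset_card_of_nodup hnodupT]
    have hls := c.length_support
    rw [c.support_eq_cons] at hls
    simp only [List.length_cons] at hls
    omega
  -- orientation function
  set dart : Sym2 (Option V) → (Option V × Option V) := dartF F with hdartdef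
  have hdart : ∀ s ∈ c.edges, dart s ∈ F ∧ s = Sym2.mk (dart s).1 (dart s).2 := by
    intro s hs
    refine dartF_spec F s ?_
    induction s using Sym2.ind with
    | _ a b =>
      have hadj := c.adj_of_mem_edges hs
      rw [hG, SimpleGraph.fromRel_adj] at hadj
      rcases hadj.2 with h | h
      · exact ⟨(a, b), rfl, h⟩
      · exact ⟨(b, a), Sym2.eq_swap, h⟩
  have hmemEd : ∀ s ∈ ed, dart s ∈ F ∧ s = Sym2.mk (dart s).1 (dart s).2 := by
    intro s hs
    exact hdart s (List.mem_toFinset.mp hs)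
  -- the tail map is injective on edges
  have hinj2 : Set.InjOn (fun s => (dart s).1) ↑ed := by
    intro s hs s' hs' h
    obtain ⟨hsF, hseq⟩ := hmemEd s hs
    obtain ⟨hsF', hseq'⟩ := hmemEd s' hs'
    have := h4 _ hsF _ hsF' h
    rw [hseq, hseq', this]
  have hsub : ed.image (fun s => (dart s).1) ⊆ T := by
    intro u hu
    obtain ⟨s, hs, rfl⟩ := Finset.mem_image.mp hu
    obtain ⟨hsF, hseq⟩ := hmemEd s hs
    apply hmemT
    apply c.fst_mem_support_of_mem_edges (u := (dart s).2)
    have heta : s((dart s).1, (dart s).2) = s :=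
      hseq.symm
    rw [heta]
    exact List.mem_toFinset.mp hs
  have himg : ed.image (fun s => (dart s).1) = T := by
    apply Finset.eq_of_subset_of_card_le hsub
    rw [Finset.card_image_of_injOn hinj2, hedcard, hTcard]
  -- every cycle vertex has an outgoing F-edge into the cycle
  have hstepT : ∀ uu ∈ T, ∃ y, (uu, y) ∈ F ∧ y ∈ T := by
    intro uu huu
    rw [← himg] at huu
    obtain ⟨s, hs, rfl⟩ := Finset.mem_image.mp huu
    obtain ⟨hsF, hseq⟩ := hmemEd s hs
    refine ⟨(dart s).2, by simpa using hsF, ?_⟩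
    apply hmemT
    apply c.snd_mem_support_of_mem_edges (t := (dart s).1)
    have heta : s((dart s).1, (dart s).2) = s :=
      hseq.symm
    rw [heta]
    exact List.mem_toFinset.mp hs
  have hsome : ∀ uu ∈ T, ∃ a, uu = some a := by
    intro uu huu
    obtain ⟨y, hyF, -⟩ := hstepT uu huu
    obtain ⟨a, ha⟩ := h1 _ hyF
    exact ⟨a, ha⟩
  -- invariant finite set for f
  set SV : Finset V := Finset.univ.filter (fun a => some a ∈ T) with hSV
  have hstepV : ∀ a ∈ SV, ∃ b ∈ SV, f a = some b := by
    intro a ha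
    rw [hSV, Finset.mem_filter] at ha
    obtain ⟨y, hyF, hyT⟩ := hstepT (some a) ha.2
    obtain ⟨b, rfl⟩ := hsome y hyT
    exact ⟨b, by simp [hSV, hyT], (compat a b).mp hyF⟩
  obtain ⟨u0, hu0⟩ := List.exists_mem_of_ne_nil _ htne
  have hu0T : u0 ∈ T := by rw [hT, List.mem_toFinset]; exact hu0
  obtain ⟨a0, rfl⟩ := hsome u0 hu0T
  exact not_noCycle_of_invariant f SV a0 (by simp [hSV, hu0T]) hstepV

end GraphEquiv

section Helpers

variable {V : Type*} [Fintype V] [DecidableEq V] {R : Type*} [CommRing R]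

open Polynomial Finset

lemma augEdges_cases (M : LinCompModel V R) (e : Option V × Option V) (he : e ∈ augEdges M) :
    (∃ a b, e = (some a, some b) ∧ (a, b) ∈ M.edges) ∨
      (∃ a, e = (some a, none) ∧ a ∈ M.leak) := by
  rw [augEdges, Finset.mem_union] at he
  rcases he with h | h
  · obtain ⟨p, hp, rfl⟩ := Finset.mem_image.mp h
    exact Or.inl ⟨p.1, p.2, rfl, by simpa using hp⟩
  · obtain ⟨a, ha, rfl⟩ := Finset.mem_image.mp h
    exact Or.inr ⟨a, rfl, ha⟩

lemma augEdges_fst_some (M : LinCompModel V R) (e : Option V × Option V)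
    (he : e ∈ augEdges M) : ∃ a, e.1 = some a := by
  rcases augEdges_cases M e he with ⟨a, b, rfl, -⟩ | ⟨a, rfl, -⟩ <;> exact ⟨a, rfl⟩

lemma augEdges_fst_ne_snd (M : LinCompModel V R) (e : Option V × Option V)
    (he : e ∈ augEdges M) : e.1 ≠ e.2 := by
  rcases augEdges_cases M e he with ⟨a, b, rfl, hab⟩ | ⟨a, rfl, -⟩
  · intro h
    exact M.no_loops _ hab (by simpa using h)
  · simp

lemma augEdges_no_head_loop (M : LinCompModel V R) (j : V) (e : Option V × Option V)
    (he : e ∈ augEdges M) (h1 : e.1 = some j) : e.2 ≠ some j := by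
  intro h2
  exact augEdges_fst_ne_snd M e he (by rw [h1, h2])

lemma sum_Dj (M : LinCompModel V R) (j : V) :
    ∑ e ∈ (augEdges M).filter (fun e => e.1 = some j), augLabel M e
      = (if j ∈ M.leak then M.leakLabel j else 0)
        + ∑ e ∈ M.edges.filter (fun e => e.1 = j), M.label e := by
  have h1 : (M.edges.image (fun e => ((some e.1 : Option V), (some e.2 : Option V)))).filter
      (fun e => e.1 = some j)
      = (M.edges.filter (fun e => e.1 = j)).image
          (fun e => ((some e.1 : Option V), (some e.2 : Option V))) := by
    ext e
    simp only [Finset.mem_filter, Finset.mem_image]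
    constructor
    · rintro ⟨⟨p, hp, rfl⟩, hj⟩
      exact ⟨p, ⟨hp, by simpa using hj⟩, rfl⟩
    · rintro ⟨p, ⟨hp, hj⟩, rfl⟩
      exact ⟨⟨p, hp, rfl⟩, by simpa using hj⟩
  have h2 : (M.leak.image (fun i => ((some i : Option V), (none : Option V)))).filter
      (fun e => e.1 = some j)
      = if j ∈ M.leak then {((some j : Option V), (none : Option V))} else ∅ := by
    ext e
    simp only [Finset.mem_filter, Finset.mem_image]
    by_cases hj : j ∈ M.leak
    · simp only [hj, if_true, Finset.mem_singleton]
      constructor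
      · rintro ⟨⟨a, ha, rfl⟩, haj⟩
        simp only [Option.some_inj] at haj
        subst haj
        rfl
      · rintro rfl
        exact ⟨⟨j, hj, rfl⟩, rfl⟩
    · simp only [hj, if_false, Finset.notMem_empty, iff_false, not_and]
      rintro ⟨a, ha, rfl⟩ haj
      simp only [Option.some_inj] at haj
      subst haj
      exact hj ha
  have hdisj : Disjoint
      ((M.edges.image (fun e => ((some e.1 : Option V), (some e.2 : Option V)))).filter
        (fun e => e.1 = some j))
      ((M.leak.image (fun i => ((some i : Option V), (none : Option V)))).filter
        (fun e => e.1 = some j)) := by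
    rw [Finset.disjoint_left]
    rintro e he1 he2
    obtain ⟨p, -, rfl⟩ := Finset.mem_image.mp (Finset.mem_of_mem_filter _ he1)
    obtain ⟨a, -, h⟩ := Finset.mem_image.mp (Finset.mem_of_mem_filter _ he2)
    simp [Prod.ext_iff] at h
  rw [augEdges, Finset.filter_union, Finset.sum_union hdisj, h1, h2]
  have h3 : ∑ e ∈ (M.edges.filter (fun e => e.1 = j)).image
      (fun e => ((some e.1 : Option V), (some e.2 : Option V))), augLabel M e
      = ∑ e ∈ M.edges.filter (fun e => e.1 = j), M.label e := by
    rw [Finset.sum_image (by intro a _ b _ h; simpa [Prod.ext_iff] using h)]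
    exact Finset.sum_congr rfl (fun e _ => rfl)
  have h4 : ∑ e ∈ (if j ∈ M.leak then {((some j : Option V), (none : Option V))} else ∅),
      augLabel M e = (if j ∈ M.leak then M.leakLabel j else 0) := by
    by_cases hj : j ∈ M.leak <;> simp [hj, augLabel]
  rw [h3, h4, add_comm]

lemma Dj_head_filter (M : LinCompModel V R) (j i : V) :
    (augEdges M).filter (fun e => e.1 = some j ∧ e.2 = some i)
      = if (j, i) ∈ M.edges then {((some j : Option V), (some i : Option V))} else ∅ := by
  ext e
  by_cases hj : (j, i) ∈ M.edges <;>
    simp only [Finset.mem_filter, hj, if_true, if_false, Finset.mem_singleton,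
      Finset.notMem_empty, iff_false, iff_true]
  · constructor
    · rintro ⟨he, h1, h2⟩
      exact Prod.ext h1 h2
    · rintro rfl
      refine ⟨?_, rfl, rfl⟩
      rw [augEdges, Finset.mem_union]
      exact Or.inl (Finset.mem_image.mpr ⟨(j, i), hj, rfl⟩)
  · rintro ⟨he, h1, h2⟩
    rcases augEdges_cases M e he with ⟨a, b, rfl, hab⟩ | ⟨a, rfl, -⟩
    · simp only [Option.some_inj] at h1 h2
      subst h1; subst h2
      exact hj hab
    · simp at h2

end Helpers

-- ===== Part V : assembly =====
section S5

open Polynomial Finset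

variable {V : Type*} [Fintype V] [DecidableEq V] {R : Type*} [CommRing R]

/-- head of an optional augmented edge, as an original vertex -/
def hdO {V : Type*} : Option (Option V × Option V) → Option V
  | some (_, some i) => some i
  | _ => none

noncomputable def scalF (M : LinCompModel V R) : Option (Option V × Option V) → Polynomial R
  | none => Polynomial.X
  | some e => Polynomial.C (augLabel M e)

noncomputable def wchF (M : LinCompModel V R) : Option (Option V × Option V) → R
  | none => 1
  | some e => augLabel M e

noncomputable def vecsF (M : LinCompModel V R) (j : V) :
    Option (Option V × Option V) → (V → Polynomial R)
  | none => fun i => if i = j then Polynomial.X else 0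
  | some e => fun i =>
      Polynomial.C (augLabel M e) * ((if i = j then 1 else 0) - (if e.2 = some i then 1 else 0))

noncomputable def FrS {V : Type*} [Fintype V] [DecidableEq V]
    (r : V → Option (Option V × Option V)) : Finset (Option V × Option V) :=
  Finset.univ.biUnion (fun j => (r j).toFinset)

lemma mem_FrS {r : V → Option (Option V × Option V)} {e : Option V × Option V} :
    e ∈ FrS r ↔ ∃ j, r j = some e := by
  simp [FrS, Option.mem_toFinset, Option.mem_def]

lemma column_decomp (M : LinCompModel V R) (j : V) :
    (fun i => (Matrix.charmatrix (compMatrix M)) i j)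
      = ∑ o ∈ insert none (((augEdges M).filter (fun e => e.1 = some j)).image some),
          vecsF M j o := by
  rw [Finset.sum_insert (by simp), Finset.sum_image (by intro a _ b _ h; simpa using h)]
  funext i
  rw [Pi.add_apply, Finset.sum_apply]
  by_cases hij : i = j
  · subst hij
    rw [Matrix.charmatrix_apply_eq]
    have hA : compMatrix M i i
        = -(if i ∈ M.leak then M.leakLabel i else 0)
            - ∑ e ∈ M.edges.filter (fun e => e.1 = i), M.label e := by
      simp [compMatrix]
    rw [hA]
    have hterm : ∀ e ∈ (augEdges M).filter (fun e => e.1 = some i),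
        vecsF M i (some e) i = Polynomial.C (augLabel M e) := by
      intro e he
      rw [Finset.mem_filter] at he
      have hne := augEdges_no_head_loop M i e he.1 he.2
      simp [vecsF, hne]
    rw [Finset.sum_congr rfl hterm, ← map_sum Polynomial.C (fun e => augLabel M e) _,
      sum_Dj M i]
    have hv : vecsF M i none i = Polynomial.X := by simp [vecsF]
    rw [hv, map_sub, map_neg, map_add]
    ring
  · rw [Matrix.charmatrix_apply_ne _ _ _ hij]
    have hA : compMatrix M i j = if (j, i) ∈ M.edges then M.label (j, i) else 0 := by
      simp [compMatrix, hij]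
    rw [hA]
    have h0 : vecsF M j none i = 0 := by simp [vecsF, hij]
    rw [h0, zero_add]
    have hterm : ∀ e ∈ (augEdges M).filter (fun e => e.1 = some j),
        vecsF M j (some e) i = if e.2 = some i then -Polynomial.C (augLabel M e) else 0 := by
      intro e _
      by_cases h2 : e.2 = some i <;> simp [vecsF, hij, h2]
    rw [Finset.sum_congr rfl hterm, Finset.sum_ite, Finset.sum_const_zero, add_zero,
      Finset.filter_filter, Dj_head_filter M j i]
    by_cases hme : (j, i) ∈ M.edges <;> simp [hme, augLabel]

lemma vecs_eq_smul (M : LinCompModel V R) (j : V) (o : Option (Option V × Option V)) :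
    vecsF M j o = scalF M o •
      (fun i => (if i = j then 1 else 0) - (if hdO o = some i then (1 : Polynomial R) else 0)) := by
  funext i
  cases o with
  | none => by_cases hij : i = j <;> simp [vecsF, scalF, hdO, hij]
  | some e =>
    obtain ⟨a, b⟩ := e
    cases b with
    | none => simp [vecsF, scalF, hdO, smul_eq_mul]
    | some b => simp [vecsF, scalF, hdO, smul_eq_mul]

lemma master (M : LinCompModel V R) (i : ℕ) (hi : i < Fintype.card V) :
    (compMatrix M).charpoly.coeff i
      = forestSum (augEdges M) (augLabel M) (Fintype.card V - i) := by
  set E := augEdges M with hE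
  set A' : V → Finset (Option (Option V × Option V)) :=
    fun j => insert none ((E.filter (fun e => e.1 = some j)).image some) with hA'
  -- membership helper
  have hmemA' : ∀ (r : V → Option (Option V × Option V)), r ∈ Fintype.piFinset A' →
      ∀ j e, r j = some e → e ∈ E ∧ e.1 = some j := by
    intro r hr j e hrj
    have := (Fintype.mem_piFinset.mp hr) j
    rw [hrj, hA'] at this
    simp only [Finset.mem_insert, Finset.mem_image] at this
    rcases this with h | ⟨e', he', heq⟩
    · cases h
    · obtain rfl : e' = e := by simpa using heq
      exact Finset.mem_filter.mp he'
  -- Step 1 : determinant expansion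
  have step1 : (compMatrix M).charpoly
      = ∑ r ∈ Fintype.piFinset A', (∏ j, scalF M (r j))
          * (if NoCycle (fun a => hdO (r a)) then 1 else 0) := by
    have e1 : (compMatrix M).charpoly
        = (Matrix.detRowAlternating :
              (V → Polynomial R) [⋀^V]→ₗ[Polynomial R] Polynomial R).toMultilinearMap
            (fun j => (fun i' => Matrix.charmatrix (compMatrix M) i' j)) := by
      rw [Matrix.charpoly, ← Matrix.det_transpose]
      rfl
    rw [e1]
    have hcols : (fun j => (fun i' => Matrix.charmatrix (compMatrix M) i' j))
        = fun j => ∑ o ∈ A' j, vecsF M j o := funext (fun j => column_decomp M j)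
    rw [hcols]
    rw [MultilinearMap.map_sum_finset]
    refine Finset.sum_congr rfl ?_
    intro r hr
    have hrows : (fun j => vecsF M j (r j))
        = fun j => scalF M (r j) • (funMat (fun a => hdO (r a)) : Matrix V V (Polynomial R)) j := by
      funext j
      exact vecs_eq_smul M j (r j)
    rw [hrows]
    erw [MultilinearMap.map_smul_univ]
    have hbase : (Matrix.detRowAlternating :
          (V → Polynomial R) [⋀^V]→ₗ[Polynomial R] Polynomial R).toMultilinearMap
          (fun j => (funMat (fun a => hdO (r a)) : Matrix V V (Polynomial R)) j)
        = (funMat (fun a => hdO (r a)) : Matrix V V (Polynomial R)).det := rfl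
    rw [hbase, smul_eq_mul]
    by_cases hnc : NoCycle (fun a => hdO (r a))
    · rw [det_funMat_of_noCycle _ hnc, if_pos hnc]
    · rw [det_funMat_of_cycle _ hnc, if_neg hnc]
  -- Step 2 : restrict to acyclic choices, split the product
  have hprod : ∀ r : V → Option (Option V × Option V), (∏ j, scalF M (r j))
      = Polynomial.X ^ (Finset.univ.filter (fun j => r j = none)).card
        * Polynomial.C (∏ j ∈ Finset.univ.filter (fun j => r j ≠ none), wchF M (r j)) := by
    intro r
    rw [← Finset.prod_filter_mul_prod_filter_not Finset.univ (fun j => r j = none)]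
    congr 1
    · rw [Finset.prod_congr rfl (fun j hj => ?_), Finset.prod_const]
      rw [Finset.mem_filter] at hj
      rw [hj.2]
      rfl
    · have hc : ∀ j ∈ Finset.univ.filter (fun j => ¬ r j = none),
          scalF M (r j) = Polynomial.C (wchF M (r j)) := by
        intro j hj
        rw [Finset.mem_filter] at hj
        obtain ⟨e, he⟩ := Option.ne_none_iff_exists'.mp hj.2
        rw [he]
        rfl
      rw [Finset.prod_congr rfl hc, ← map_prod]
  have step2 : (compMatrix M).charpoly.coeff i
      = ∑ r ∈ (Fintype.piFinset A').filter
          (fun r => (NoCycle (fun a => hdO (r a))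
            ∧ (Finset.univ.filter (fun j => r j = none)).card = i)),
          ∏ j ∈ Finset.univ.filter (fun j => r j ≠ none), wchF M (r j) := by
    have hcoeff : ∀ (c : ℕ) (p : R), (Polynomial.X ^ c * Polynomial.C p).coeff i
        = if c = i then p else 0 := by
      intro c p
      rw [mul_comm, Polynomial.coeff_C_mul, Polynomial.coeff_X_pow]
      by_cases h : i = c
      · subst h; simp
      · simp [h, Ne.symm h]
    rw [step1, Polynomial.finset_sum_coeff]
    rw [Finset.sum_filter]
    refine Finset.sum_congr rfl ?_
    intro r hr
    rw [hprod r]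
    by_cases hnc : NoCycle (fun a => hdO (r a))
    · rw [if_pos hnc, mul_one, hcoeff]
      by_cases hcard : (Finset.univ.filter (fun j => r j = none)).card = i
      · simp [hcard, hnc]
      · simp [hcard]
    · rw [if_neg hnc, mul_zero, Polynomial.coeff_zero]
      simp [hnc]
  rw [step2]
  -- Step 3 : bijection with incoming forests
  unfold forestSum
  -- facts about FrS r for admissible r
  have hdisj : ∀ (r : V → Option (Option V × Option V)), r ∈ Fintype.piFinset A' →
      ∀ j ∈ Finset.univ, ∀ j' ∈ Finset.univ, j ≠ j' →
        Disjoint ((r j).toFinset) ((r j').toFinset) := by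
    intro r hr j _ j' _ hjj'
    rw [Finset.disjoint_left]
    intro e he he'
    rw [Option.mem_toFinset, Option.mem_def] at he he'
    have h1 := (hmemA' r hr j e he).2
    have h2 := (hmemA' r hr j' e he').2
    rw [h1] at h2
    exact hjj' (by simpa using h2)
  have hcardF : ∀ (r : V → Option (Option V × Option V)), r ∈ Fintype.piFinset A' →
      (FrS r).card = (Finset.univ.filter (fun j => r j ≠ none)).card := by
    intro r hr
    rw [FrS, Finset.card_biUnion (hdisj r hr), Finset.card_filter]
    refine Finset.sum_congr rfl ?_
    intro j _
    cases hrj : r j <;> simp [hrj]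
  have hsubE : ∀ (r : V → Option (Option V × Option V)), r ∈ Fintype.piFinset A' →
      FrS r ⊆ E := by
    intro r hr e he
    obtain ⟨j, hj⟩ := mem_FrS.mp he
    exact (hmemA' r hr j e hj).1
  have hcompat : ∀ (r : V → Option (Option V × Option V)), r ∈ Fintype.piFinset A' →
      ∀ a b, ((some a, some b) ∈ FrS r ↔ (fun x => hdO (r x)) a = some b) := by
    intro r hr a b
    constructor
    · intro h
      obtain ⟨j, hj⟩ := mem_FrS.mp h
      have ht := (hmemA' r hr j _ hj).2
      have haj : a = j := by simpa using ht
      subst haj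
      show hdO (r a) = some b
      rw [hj]
      rfl
    · intro h
      have h2 : hdO (r a) = some b := h
      cases hrj : r a with
      | none => rw [hrj] at h2; simp [hdO] at h2
      | some e =>
        rw [hrj] at h2
        have h1 := (hmemA' r hr a e hrj).2
        obtain ⟨x, y⟩ := e
        cases y with
        | none => simp [hdO] at h2
        | some b' =>
          have hb : b' = b := by simpa [hdO] using h2
          subst hb
          have hx : x = some a := h1
          subst hx
          exact mem_FrS.mpr ⟨a, hrj⟩
  have hone : ∀ (r : V → Option (Option V × Option V)), r ∈ Fintype.piFinset A' →
      ∀ e ∈ FrS r, ∃ a, e.1 = some a := by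
    intro r hr e he
    exact augEdges_fst_some M e (hsubE r hr he)
  have houtdeg : ∀ (r : V → Option (Option V × Option V)), r ∈ Fintype.piFinset A' →
      ∀ e ∈ FrS r, ∀ e' ∈ FrS r, e.1 = e'.1 → e = e' := by
    intro r hr e he e' he' h11
    obtain ⟨j, hj⟩ := mem_FrS.mp he
    obtain ⟨j', hj'⟩ := mem_FrS.mp he'
    have h1 := (hmemA' r hr j e hj).2
    have h2 := (hmemA' r hr j' e' hj').2
    rw [h11, h2] at h1
    obtain rfl : j' = j := by simpa using h1
    rw [hj'] at hj
    exact (Option.some_inj.mp hj).symm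
  have hforest_iff : ∀ (r : V → Option (Option V × Option V)), r ∈ Fintype.piFinset A' →
      (IsIncomingForest (FrS r) ↔ NoCycle (fun a => hdO (r a))) := by
    intro r hr
    constructor
    · intro hF
      by_contra hnc
      exact (not_isAcyclic_of_cycle (FrS r) _ (hcompat r hr) hF.1 hF.2.1 hnc) hF.2.2.1
    · intro hnc
      refine ⟨?_, ?_, ?_, houtdeg r hr⟩
      · intro e he
        exact augEdges_fst_ne_snd M e (hsubE r hr he)
      · intro e he hopp
        obtain ⟨a, ha⟩ := hone r hr e he
        rcases augEdges_cases M e (hsubE r hr he) with ⟨a', b', rfl, -⟩ | ⟨a', rfl, -⟩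
        · -- e = (some a', some b'), opposite (some b', some a') ∈ FrS r
          have h1 : (fun x => hdO (r x)) a' = some b' := (hcompat r hr a' b').mp he
          have h2 : (fun x => hdO (r x)) b' = some a' := (hcompat r hr b' a').mp hopp
          exact hnc a' (Relation.TransGen.head
            (show drel (fun a => hdO (r a)) a' b' from h2)
            (Relation.TransGen.single (show drel (fun a => hdO (r a)) b' a' from h1)))
        · obtain ⟨c, hc⟩ := hone r hr _ hopp
          simp at hc
      · by_contra hac
        exact (not_noCycle_of_not_isAcyclic (FrS r) _ (hcompat r hr) (hone r hr)
          (houtdeg r hr) hac) hnc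
  have hprodF : ∀ (r : V → Option (Option V × Option V)), r ∈ Fintype.piFinset A' →
      (∏ j ∈ Finset.univ.filter (fun j => r j ≠ none), wchF M (r j)) = ∏ e ∈ FrS r, augLabel M e := by
    intro r hr
    rw [FrS, Finset.prod_biUnion (hdisj r hr)]
    rw [← Finset.prod_filter_mul_prod_filter_not Finset.univ (fun j => r j ≠ none)
      (fun j => ∏ e ∈ (r j).toFinset, augLabel M e)]
    have hright : (∏ j ∈ Finset.univ.filter (fun j => ¬ r j ≠ none),
        ∏ e ∈ (r j).toFinset, augLabel M e) = 1 := by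
      refine Finset.prod_eq_one ?_
      intro j hj
      rw [Finset.mem_filter, not_not] at hj
      rw [hj.2]
      rfl
    rw [hright, mul_one]
    refine Finset.prod_congr rfl ?_
    intro j hj
    rw [Finset.mem_filter] at hj
    obtain ⟨e, he⟩ := Option.ne_none_iff_exists'.mp hj.2
    rw [he]
    simp [wchF]
  -- the bijection
  refine Finset.sum_bij (fun r _ => FrS r) ?_ ?_ ?_ ?_
  · -- membership
    intro r hr
    rw [Finset.mem_filter] at hr ⊢
    obtain ⟨hr1, hr2, hr3⟩ := hr
    refine ⟨Finset.mem_powerset.mpr (hsubE r hr1), ?_, (hforest_iff r hr1).mpr hr2⟩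
    rw [hcardF r hr1]
    have := Finset.card_filter_add_card_filter_not
      (s := Finset.univ (α := V)) (p := fun j => r j = none)
    simp only [Finset.card_univ] at this
    have hne' : (Finset.univ.filter (fun j => ¬ r j = none)).card
        = Fintype.card V - i := by omega
    simpa using hne'
  · -- injectivity
    intro r hr r' hr' heq0
    have heq : FrS r = FrS r' := heq0
    rw [Finset.mem_filter] at hr hr'
    funext j
    cases hrj : r j with
    | none =>
      cases hrj' : r' j with
      | none => rfl
      | some e =>
        have heF : e ∈ FrS r := by rw [heq]; exact mem_FrS.mpr ⟨j, hrj'⟩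
        obtain ⟨j'', hj''⟩ := mem_FrS.mp heF
        have ht1 := (hmemA' r hr.1 j'' e hj'').2
        have ht2 := (hmemA' r' hr'.1 j e hrj').2
        rw [ht2] at ht1
        obtain rfl : j = j'' := by simpa using ht1
        rw [hrj] at hj''
        cases hj''
    | some e =>
      have heF : e ∈ FrS r' := by rw [← heq]; exact mem_FrS.mpr ⟨j, hrj⟩
      obtain ⟨j'', hj''⟩ := mem_FrS.mp heF
      have ht1 := (hmemA' r' hr'.1 j'' e hj'').2
      have ht2 := (hmemA' r hr.1 j e hrj).2
      rw [ht2] at ht1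
      obtain rfl : j = j'' := by simpa using ht1
      rw [hj'']
  · -- surjectivity
    intro F hF
    rw [Finset.mem_filter] at hF
    obtain ⟨hFpow, hFcard, hFforest⟩ := hF
    have hFsub := Finset.mem_powerset.mp hFpow
    set r : V → Option (Option V × Option V) :=
      fun j => if h : ∃ e ∈ F, e.1 = some j then some h.choose else none with hrdef
    have hrval : ∀ j (h : ∃ e ∈ F, e.1 = some j), r j = some h.choose := by
      intro j h
      simp only [hrdef]
      rw [dif_pos h]
    have hrval' : ∀ j, ¬ (∃ e ∈ F, e.1 = some j) → r j = none := by
      intro j h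
      simp only [hrdef]
      rw [dif_neg h]
    have hrspec : ∀ j e, r j = some e → e ∈ F ∧ e.1 = some j := by
      intro j e hrj
      by_cases h : ∃ e ∈ F, e.1 = some j
      · rw [hrval j h] at hrj
        obtain rfl : h.choose = e := Option.some_inj.mp hrj
        exact h.choose_spec
      · rw [hrval' j h] at hrj
        cases hrj
    have hrmem : r ∈ Fintype.piFinset A' := by
      rw [Fintype.mem_piFinset]
      intro j
      cases hrj : r j with
      | none => simp [hA']
      | some e =>
        obtain ⟨heF, hej⟩ := hrspec j e hrj
        rw [hA']
        simp only [Finset.mem_insert, Finset.mem_image]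
        exact Or.inr ⟨e, Finset.mem_filter.mpr ⟨hFsub heF, hej⟩, rfl⟩
    have hFr : FrS r = F := by
      apply Finset.Subset.antisymm
      · intro e he
        obtain ⟨j, hj⟩ := mem_FrS.mp he
        exact (hrspec j e hj).1
      · intro e he
        obtain ⟨j, hj⟩ := augEdges_fst_some M e (hFsub he)
        have hex : ∃ e' ∈ F, e'.1 = some j := ⟨e, he, hj⟩
        have hch := hex.choose_spec
        have hce : hex.choose = e := hFforest.2.2.2 _ hch.1 _ he (hch.2.trans hj.symm)
        refine mem_FrS.mpr ⟨j, ?_⟩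
        rw [hrval j hex, hce]
    refine ⟨r, ?_, hFr⟩
    rw [Finset.mem_filter]
    have hNC : NoCycle (fun a => hdO (r a)) := by
      apply (hforest_iff r hrmem).mp
      rw [hFr]
      exact hFforest
    refine ⟨hrmem, hNC, ?_⟩
    have hc1 := hcardF r hrmem
    rw [hFr, hFcard] at hc1
    have := Finset.card_filter_add_card_filter_not
      (s := Finset.univ (α := V)) (p := fun j => r j = none)
    simp only [Finset.card_univ] at this
    have : (Finset.univ.filter (fun j => r j = none)).card
        + (Finset.univ.filter (fun j => r j ≠ none)).card = Fintype.card V := by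
      simpa using this
    omega
  · -- values
    intro r hr
    rw [Finset.mem_filter] at hr
    exact hprodF r hr.1

end S5

/-- Writing `det (λ I - A) = λ^n + e_{n-1} λ^{n-1} + ⋯ + e_0` for the
compartmental matrix `A` of a linear compartment model with `n` compartments, each
coefficient `e_i` (for `i < n`) equals the sum, over all spanning incoming forests of the
leak-augmented graph `G̃` with exactly `n - i` edges, of the products of the edge labels. -/
theorem compMatrix_charpoly_coeff_eq_forestSum {R : Type*} [CommRing R] {n : ℕ}
    (M : LinCompModel (Fin n) R) (i : ℕ) (hi : i < n) :
    (compMatrix M).charpoly.coeff i = forestSum (augEdges M) (augLabel M) (n - i) := by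
  have h := master M i (by rw [Fintype.card_fin]; exact hi)
  rwa [Fintype.card_fin] at h
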